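/- Let g_N, g_A : E → E be L-Lipschitz maps on a normed space with ‖g_C(θ)‖ ≤ G for all θ and C ∈ {N, A}, and let r_N, r_A ≥ 0 with r_N + r_A = 1. Define the update θ^{(k+1)} = θ^{(k)} + η·(r_N·g_N(θ^{(k)}) + r_A·g_A(θ^{(k)})). If ‖g_N(θ^{(0)})‖ − ‖g_A(θ^{(0)})‖ ≥ c > 0 for some constant c and η satisfies 2LηG·(k+1) < c for a given k, then ‖g_N(θ^{(j)})‖ > ‖g_A(θ^{(j)})‖ for all j ≤ k+1. -/
import Mathlib


theorem stmt_5 {E : Type*} [NormedAddCommGroup E] [NormedSpace ℝ E]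
    (gN gA : E → E) (L G : ℝ) (hL : 0 ≤ L)
    (hLipN : ∀ θ₁ θ₂ : E, ‖gN θ₁ - gN θ₂‖ ≤ L * ‖θ₁ - θ₂‖)
    (hLipA : ∀ θ₁ θ₂ : E, ‖gA θ₁ - gA θ₂‖ ≤ L * ‖θ₁ - θ₂‖)
    (hGN : ∀ θ : E, ‖gN θ‖ ≤ G) (hGA : ∀ θ : E, ‖gA θ‖ ≤ G)
    (rN rA : ℝ) (hN : 0 ≤ rN) (hA : 0 ≤ rA) (hsum : rN + rA = 1)
    (η : ℝ) (hη : 0 < η) (θ : ℕ → E)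
    (hupd : ∀ k : ℕ, θ (k + 1) = θ k + η • (rN • gN (θ k) + rA • gA (θ k)))
    (c : ℝ) (hc : 0 < c) (hinit : ‖gN (θ 0)‖ - ‖gA (θ 0)‖ ≥ c)
    (k : ℕ) (hstep : 2 * L * η * G * (k + 1) < c) :
    ∀ j ≤ k + 1, ‖gA (θ j)‖ < ‖gN (θ j)‖ := by
  have hG : 0 ≤ G := le_trans (norm_nonneg _) (hGN (θ 0))
  -- step bound: ‖θ (j+1) - θ j‖ ≤ η * G
  have hdelta : ∀ j : ℕ, ‖θ (j + 1) - θ j‖ ≤ η * G := by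
    intro j
    rw [hupd j]
    have : θ j + η • (rN • gN (θ j) + rA • gA (θ j)) - θ j
        = η • (rN • gN (θ j) + rA • gA (θ j)) := by abel
    rw [this, norm_smul]
    have hv : ‖rN • gN (θ j) + rA • gA (θ j)‖ ≤ G := by
      calc ‖rN • gN (θ j) + rA • gA (θ j)‖
          ≤ ‖rN • gN (θ j)‖ + ‖rA • gA (θ j)‖ := norm_add_le _ _
        _ = rN * ‖gN (θ j)‖ + rA * ‖gA (θ j)‖ := by
            rw [norm_smul, norm_smul, Real.norm_of_nonneg hN, Real.norm_of_nonneg hA]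
        _ ≤ rN * G + rA * G := by
            gcongr
            · exact hGN _
            · exact hGA _
        _ = G := by rw [← add_mul, hsum, one_mul]
    rw [Real.norm_of_nonneg hη.le]
    exact mul_le_mul_of_nonneg_left hv hη.le
  -- gap lower bound by induction
  have hgap : ∀ j : ℕ, c - 2 * L * η * G * j ≤ ‖gN (θ j)‖ - ‖gA (θ j)‖ := by
    intro j
    induction j with
    | zero => simpa using hinit
    | succ n ih =>
      have hN' : ‖gN (θ n)‖ - L * (η * G) ≤ ‖gN (θ (n + 1))‖ := by
        have h1 : ‖gN (θ n)‖ - ‖gN (θ (n + 1))‖ ≤ ‖gN (θ n) - gN (θ (n + 1))‖ :=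
          norm_sub_norm_le _ _
        have h2 : ‖gN (θ n) - gN (θ (n + 1))‖ ≤ L * ‖θ n - θ (n + 1)‖ := hLipN _ _
        have h3 : ‖θ n - θ (n + 1)‖ = ‖θ (n + 1) - θ n‖ := norm_sub_rev _ _
        have := hdelta n
        nlinarith [hdelta n]
      have hA' : ‖gA (θ (n + 1))‖ ≤ ‖gA (θ n)‖ + L * (η * G) := by
        have h1 : ‖gA (θ (n + 1))‖ - ‖gA (θ n)‖ ≤ ‖gA (θ (n + 1)) - gA (θ n)‖ :=
          norm_sub_norm_le _ _
        have h2 : ‖gA (θ (n + 1)) - gA (θ n)‖ ≤ L * ‖θ (n + 1) - θ n‖ := hLipA _ _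
        nlinarith [hdelta n]
      have hcast : ((n + 1 : ℕ) : ℝ) = (n : ℝ) + 1 := by push_cast; ring
      rw [hcast]
      nlinarith
  intro j hj
  have h1 := hgap j
  have h2 : 2 * L * η * G * (j : ℝ) ≤ 2 * L * η * G * ((k : ℝ) + 1) := by
    have hjk : (j : ℝ) ≤ (k : ℝ) + 1 := by exact_mod_cast hj
    have hnn : (0:ℝ) ≤ 2 * L * η * G := by positivity
    exact mul_le_mul_of_nonneg_left hjk hnn
  have : (0:ℝ) < c - 2 * L * η * G * ((k:ℝ) + 1) := by
    have : ((k:ℝ) + 1) = ((k + 1 : ℕ) : ℝ) := by push_cast; ring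
    nlinarith [hstep]
  linarith
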